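/- arXiv:2508.05682 — 2 statements merged into one kernel-verified Lean document; each statement's English description precedes it below -/
import Mathlib

section
/- There is no bi-Heyting algebra embedding (injective lattice homomorphism preserving ⇨, \, ⊤, ⊥) of the three-element chain into B × Bool for any bi-Heyting algebra B. -/
local instance : BiheytingAlgebra (Fin 3) := LinearOrder.toBiheytingAlgebra (Fin 3)

/-- There is no bi-Heyting algebra embedding of the three-element chain into
`B × Bool` for any bi-Heyting algebra `B`. -/
theorem stmt2 (B : Type*) [BiheytingAlgebra B] :
    ¬ ∃ f : Fin 3 → B × Bool, Function.Injective f ∧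
      (∀ a b, f (a ⊓ b) = f a ⊓ f b) ∧ (∀ a b, f (a ⊔ b) = f a ⊔ f b) ∧
      f ⊤ = ⊤ ∧ f ⊥ = ⊥ ∧
      (∀ a b, f (a ⇨ b) = f a ⇨ f b) ∧ (∀ a b, f (a \ b) = f a \ f b) := by
  rintro ⟨f, hinj, hinf, hsup, htop, hbot, himp, hsdiff⟩
  have h0 : f 0 = ⊥ := by
    have : (⊥ : Fin 3) = 0 := by decide
    rw [← this, hbot]
  have h2 : f 2 = ⊤ := by
    have : (⊤ : Fin 3) = 2 := by decide
    rw [← this, htop]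
  cases hb : (f 1).2 with
  | false =>
    have h := himp 1 0
    have he : (1 : Fin 3) ⇨ 0 = 0 := by decide
    rw [he] at h
    have h2' := congrArg Prod.snd h
    simp only [h0, hb] at h2'
    simp [Prod.snd_bot] at h2'
    simp [hb] at h2'
  | true =>
    have h := hsdiff 2 1
    have he : (2 : Fin 3) \ 1 = 2 := by decide
    rw [he] at h
    have h2' := congrArg Prod.snd h
    simp only [h2, hb] at h2'
    simp [Prod.snd_top] at h2'
    simp [hb] at h2'
end

section
/- The three-element chain and the product of the three-element chain with the two-element Boolean algebra do not satisfy the same positive existential sentences: the sentence ∃x (¬x = ⊥ ∧ ∼x = ⊤) holds in the three-element chain but fails in (three-element chain) × Bool. -/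
/-- The positive existential sentence `∃ x, ¬x = ⊥ ∧ ∼x = ⊤` holds in the
three-element chain but fails in (three-element chain) × Bool. -/
theorem stmt4 :
    (∃ x : Fin 3, xᶜ = ⊥ ∧ ￢x = ⊤) ∧
      ¬ (∃ x : Fin 3 × Bool, xᶜ = ⊥ ∧ ￢x = ⊤) := by
  constructor
  · exact ⟨1, by decide, by decide⟩
  · rintro ⟨⟨a, b⟩, h1, h2⟩
    have c1 : bᶜ = ⊥ := congrArg Prod.snd h1
    have c2 : ￢b = ⊤ := congrArg Prod.snd h2
    cases b <;> simp_all
end
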